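/- Let $\bar M$ be an $n\times n$ symmetric matrix with $0\preceq \bar M\preceq I$, and define the matrix recursion $N_0=\bar M$, $N_{t+1}=N_t(I-2\bar M)+\|N_t\|\cdot\bar M$ (where $\|\cdot\|$ is the operator norm). Then every $N_t$ is a polynomial in $\bar M$ (hence symmetric and commuting with $\bar M$), and $N_t \succeq 0$ for all $t\ge0$. -/

import Mathlib

open scoped Matrix.Norms.L2Operator

open Matrix Polynomial

variable {n : ℕ}

lemma aeval_conj (V : Matrix (Fin n) (Fin n) ℝ) (d : Fin n → ℝ)
    (hV1 : V * star V = 1) (hV2 : star V * V = 1) (p : ℝ[X]) :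
    aeval (V * diagonal d * star V) p = V * diagonal (fun i => p.eval (d i)) * star V := by
  induction p using Polynomial.induction_on with
  | C a =>
      simp only [aeval_C, eval_C]
      rw [show (diagonal (fun _ : Fin n => a)) = a • (1 : Matrix (Fin n) (Fin n) ℝ) by
        simp [Matrix.smul_one_eq_diagonal]]
      rw [Matrix.mul_smul, Matrix.mul_one, Matrix.smul_mul, hV1]
      simp [Algebra.algebraMap_eq_smul_one]
  | add p q hp hq =>
      simp only [map_add, eval_add, hp, hq]
      rw [← Matrix.add_mul, ← Matrix.mul_add, diagonal_add]
  | monomial k a ih =>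
      have h1 : (C a * X ^ (k + 1) : ℝ[X]) = (C a * X ^ k) * X := by ring
      rw [h1, _root_.map_mul, ih, aeval_X]
      simp only [Matrix.mul_assoc]
      rw [← Matrix.mul_assoc (star V) V, hV2, Matrix.one_mul,
        ← Matrix.mul_assoc (diagonal _) (diagonal d), diagonal_mul_diagonal]
      congr 2
      funext i
      simp

lemma conj_posSemidef_iff (V : Matrix (Fin n) (Fin n) ℝ) (d : Fin n → ℝ)
    (hV1 : V * star V = 1) (hV2 : star V * V = 1) :
    (V * diagonal d * star V).PosSemidef ↔ ∀ i, 0 ≤ d i := by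
  constructor
  · intro h
    rw [← posSemidef_diagonal_iff (d := d)]
    have := h.conjTranspose_mul_mul_same V
    have e : Vᴴ * (V * diagonal d * star V) * V = diagonal d := by
      rw [show (Vᴴ : Matrix (Fin n) (Fin n) ℝ) = star V from rfl]
      rw [← Matrix.mul_assoc, ← Matrix.mul_assoc, hV2, Matrix.one_mul,
        Matrix.mul_assoc, hV2, Matrix.mul_one]
    rwa [e] at this
  · intro h
    have := (Matrix.PosSemidef.diagonal (d := d) h).mul_mul_conjTranspose_same V
    rwa [show (Vᴴ : Matrix (Fin n) (Fin n) ℝ) = star V from rfl] at this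

lemma norm_smul_one_sub_posSemidef (A : Matrix (Fin n) (Fin n) ℝ) (hA : A.IsHermitian) :
    ((‖A‖ • (1 : Matrix (Fin n) (Fin n) ℝ)) - A).PosSemidef := by
  rw [posSemidef_iff_dotProduct_mulVec]
  constructor
  · exact Matrix.IsHermitian.sub (by simp [Matrix.IsHermitian]) hA
  · intro x
    have hsx : star x = x := by simp
    rw [Matrix.sub_mulVec, Matrix.smul_mulVec, Matrix.one_mulVec, hsx,
      dotProduct_sub, dotProduct_smul]
    set x' : EuclideanSpace ℝ (Fin n) := (EuclideanSpace.equiv (Fin n) ℝ).symm x with hx'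
    set y' : EuclideanSpace ℝ (Fin n) := (EuclideanSpace.equiv (Fin n) ℝ).symm (A *ᵥ x) with hy'
    have hinner : x ⬝ᵥ (A *ᵥ x) = (inner ℝ x' y' : ℝ) := by
      simp [hx', hy', dotProduct, PiLp.inner_apply, RCLike.inner_apply, mul_comm]
    have hxx : x ⬝ᵥ x = ‖x'‖ ^ 2 := by
      rw [← real_inner_self_eq_norm_sq]
      simp [hx', dotProduct, PiLp.inner_apply, RCLike.inner_apply, -real_inner_self_eq_norm_sq,
        -inner_self_eq_norm_sq_to_K]
    have h1 : x ⬝ᵥ (A *ᵥ x) ≤ ‖A‖ * (x ⬝ᵥ x) := by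
      calc x ⬝ᵥ (A *ᵥ x) ≤ ‖x'‖ * ‖y'‖ := by rw [hinner]; exact real_inner_le_norm _ _
        _ ≤ ‖x'‖ * (‖A‖ * ‖x'‖) :=
            mul_le_mul_of_nonneg_left (A.l2_opNorm_mulVec x') (norm_nonneg _)
        _ = ‖A‖ * (x ⬝ᵥ x) := by rw [hxx]; ring
    have h2 : 0 ≤ ‖A‖ * (x ⬝ᵥ x) - x ⬝ᵥ (A *ᵥ x) := by linarith
    simpa [smul_eq_mul] using h2

lemma conj_isHermitian (V : Matrix (Fin n) (Fin n) ℝ) (e : Fin n → ℝ) :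
    (V * diagonal e * star V).IsHermitian := by
  simp [Matrix.IsHermitian, Matrix.star_eq_conjTranspose, Matrix.conjTranspose_mul,
    Matrix.diagonal_conjTranspose, Matrix.mul_assoc]


/-- for the recursion `N₀ = M̄`, `N_{t+1} = N_t (I - 2M̄) + ‖N_t‖ M̄`
(with `‖·‖` the `ℓ²` operator norm), every `N_t` is a polynomial in `M̄`
(hence symmetric and commuting with `M̄`) and `N_t ⪰ 0`. -/
theorem matrix_recursion_psd {n : ℕ}
    (Mbar : Matrix (Fin n) (Fin n) ℝ)
    (hM0 : Mbar.PosSemidef) (hM1 : (1 - Mbar).PosSemidef)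
    (N : ℕ → Matrix (Fin n) (Fin n) ℝ)
    (hN0 : N 0 = Mbar)
    (hNrec : ∀ t : ℕ, N (t + 1) = N t * (1 - (2 : ℝ) • Mbar) + ‖N t‖ • Mbar) :
    ∀ t : ℕ,
      (∃ p : Polynomial ℝ, N t = Polynomial.aeval Mbar p) ∧
      (N t).IsSymm ∧ N t * Mbar = Mbar * N t ∧ (N t).PosSemidef := by
  obtain ⟨V, hVdef⟩ : ∃ V : Matrix (Fin n) (Fin n) ℝ,
      V = (hM0.1.eigenvectorUnitary : Matrix (Fin n) (Fin n) ℝ) := ⟨_, rfl⟩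
  obtain ⟨d, hddef⟩ : ∃ d : Fin n → ℝ, d = hM0.1.eigenvalues := ⟨_, rfl⟩
  have hV1 : V * star V = 1 := by
    rw [hVdef]; exact (Matrix.mem_unitaryGroup_iff).mp hM0.1.eigenvectorUnitary.2
  have hV2 : star V * V = 1 := by
    rw [hVdef]; exact (Matrix.mem_unitaryGroup_iff').mp hM0.1.eigenvectorUnitary.2
  have hMeq : Mbar = V * diagonal d * star V := by
    rw [hVdef, hddef]; simpa using hM0.1.spectral_theorem
  have hF : ∀ p : ℝ[X], aeval Mbar p = V * diagonal (fun i => p.eval (d i)) * star V := by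
    intro p
    conv_lhs => rw [hMeq]
    exact aeval_conj V d hV1 hV2 p
  have hd0 : ∀ i, 0 ≤ d i := by
    intro i; rw [hddef]; exact hM0.eigenvalues_nonneg i
  have hd1 : ∀ i, d i ≤ 1 := by
    intro i
    have h1 : (1 : Matrix (Fin n) (Fin n) ℝ) - Mbar = aeval Mbar ((1 : ℝ[X]) - X) := by
      simp
    have := (conj_posSemidef_iff V _ hV1 hV2).mp (by rw [← hF ((1 : ℝ[X]) - X), ← h1]; exact hM1) i
    simp only [eval_sub, eval_one, eval_X] at this
    linarith
  have key : ∀ t, ∃ p : ℝ[X], N t = aeval Mbar p ∧ ∀ i, 0 ≤ p.eval (d i) := by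
    intro t
    induction t with
    | zero => exact ⟨X, by simp [hN0], fun i => by simpa using hd0 i⟩
    | succ t ih =>
      obtain ⟨p, hp, hp0⟩ := ih
      have hHerm : (N t).IsHermitian := by
        rw [hp, hF]; exact conj_isHermitian V _
      have hub : ∀ i, p.eval (d i) ≤ ‖N t‖ := by
        intro i
        have hpsd := norm_smul_one_sub_posSemidef (N t) hHerm
        have heq : (‖N t‖ • (1 : Matrix (Fin n) (Fin n) ℝ)) - N t
            = aeval Mbar (C ‖N t‖ - p) := by
          rw [map_sub, aeval_C, hp, Algebra.algebraMap_eq_smul_one]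
        rw [heq, hF] at hpsd
        have := (conj_posSemidef_iff V _ hV1 hV2).mp hpsd i
        simp only [eval_sub, eval_C] at this
        linarith
      refine ⟨p * (1 - C 2 * X) + C ‖N t‖ * X, ?_, ?_⟩
      · rw [hNrec t, map_add, _root_.map_mul, map_sub, _root_.map_one, _root_.map_mul,
          _root_.map_mul, aeval_C, aeval_C, aeval_X, ← Algebra.smul_def, ← Algebra.smul_def,
          ← hp]
      · intro i
        have h1 := hd0 i; have h2 := hd1 i; have h3 := hp0 i; have h4 := hub i
        simp only [eval_add, eval_mul, eval_sub, eval_one, eval_C, eval_X]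
        nlinarith
  intro t
  obtain ⟨p, hp, hp0⟩ := key t
  have hHerm : (N t).IsHermitian := by rw [hp, hF]; exact conj_isHermitian V _
  refine ⟨⟨p, hp⟩, ?_, ?_, ?_⟩
  · exact Matrix.isHermitian_iff_isSymm.mp hHerm
  · have hcomm : ∀ q r : ℝ[X], aeval Mbar q * aeval Mbar r = aeval Mbar r * aeval Mbar q := by
      intro q r; rw [← _root_.map_mul, mul_comm, _root_.map_mul]
    calc N t * Mbar = aeval Mbar p * aeval Mbar X := by rw [hp, aeval_X]
      _ = aeval Mbar X * aeval Mbar p := hcomm p X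
      _ = Mbar * N t := by rw [hp, aeval_X]
  · rw [hp, hF]
    exact (conj_posSemidef_iff V _ hV1 hV2).mpr hp0
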